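/- Bridge formula: let G be block diagonal with blocks N¹ and N², let i be an index in the first block and j in the second, and let E_{ij} be the matrix with ones at (i,j) and (j,i) and zeros elsewhere. If I - δG and I - δ(G + E_{ij}) are invertible and 1 - δ² m_{ii} m_{jj} ≠ 0, then 1ᵀ(I - δ(G + E_{ij}))^{-1}1 - 1ᵀ(I - δG)^{-1}1 = δ · (δ m_{jj} b_i² + δ m_{ii} b_j² + 2 b_i b_j)/(1 - δ² m_{ii} m_{jj}), where m_{ii} = m_{ii}(N¹), m_{jj} = m_{jj}(N²), b_i = b_i(N¹,1), b_j = b_j(N²,1). -/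

import Mathlib

open Matrix

variable {n : Type*} [Fintype n]

private lemma bf_mul_vecMulVec (A : Matrix n n ℝ) (w x : n → ℝ) :
    A * vecMulVec w x = vecMulVec (A *ᵥ w) x := by
  ext a b
  simp [Matrix.mul_apply, vecMulVec_apply, Matrix.mulVec, dotProduct, Finset.sum_mul]
  congr 1; ext c; ring

private lemma bf_vecMulVec_mul (w x : n → ℝ) (A : Matrix n n ℝ) :
    vecMulVec w x * A = vecMulVec w (Aᵀ *ᵥ x) := by
  ext a b
  simp [Matrix.mul_apply, vecMulVec_apply, Matrix.mulVec, dotProduct, Finset.mul_sum]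
  congr 1; ext c; ring

private lemma bf_vecMulVec_mul_vecMulVec (a b c d : n → ℝ) :
    vecMulVec a b * vecMulVec c d = (b ⬝ᵥ c) • vecMulVec a d := by
  ext x y
  simp [Matrix.mul_apply, vecMulVec_apply, dotProduct, Finset.sum_mul, Finset.mul_sum]
  congr 1; ext z; ring

private lemma bf_vecMulVec_mulVec (w x f : n → ℝ) :
    vecMulVec w x *ᵥ f = (x ⬝ᵥ f) • w := by
  ext a
  simp [Matrix.mulVec, vecMulVec_apply, dotProduct, Finset.mul_sum, Finset.sum_mul]
  congr 1; ext z; ring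

private lemma bf_vecMulVec_smul_left (c : ℝ) (w x : n → ℝ) :
    vecMulVec (c • w) x = c • vecMulVec w x := by
  ext a b; simp [vecMulVec_apply, mul_assoc]

private lemma bf_vecMulVec_zero_left (x : n → ℝ) :
    vecMulVec (0 : n → ℝ) x = 0 := by
  ext a b; simp [vecMulVec_apply]

theorem bridge_formula {n₁ n₂ : ℕ}
    (N1 : Matrix (Fin n₁) (Fin n₁) ℝ) (N2 : Matrix (Fin n₂) (Fin n₂) ℝ) (δ : ℝ)
    (hs1 : N1.IsSymm) (hs2 : N2.IsSymm) (i : Fin n₁) (j : Fin n₂)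
    (h1 : IsUnit (1 - δ • N1)) (h2 : IsUnit (1 - δ • N2))
    (hG : IsUnit (1 - δ • Matrix.fromBlocks N1 0 0 N2))
    (hGE : IsUnit (1 - δ • (Matrix.fromBlocks N1 0 0 N2 +
      (Matrix.single (Sum.inl i) (Sum.inr j) (1 : ℝ) +
        Matrix.single (Sum.inr j) (Sum.inl i) (1 : ℝ)))))
    (hden : 1 - δ ^ 2 * ((1 - δ • N1)⁻¹ i i) * ((1 - δ • N2)⁻¹ j j) ≠ 0) :
    ((∑ a, ((1 - δ • (Matrix.fromBlocks N1 0 0 N2 +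
          (Matrix.single (Sum.inl i) (Sum.inr j) (1 : ℝ) +
            Matrix.single (Sum.inr j) (Sum.inl i) (1 : ℝ))))⁻¹ *ᵥ
            fun _ => (1 : ℝ)) a)
        - ∑ a, ((1 - δ • Matrix.fromBlocks N1 0 0 N2)⁻¹ *ᵥ fun _ => (1 : ℝ)) a)
      = δ * (δ * ((1 - δ • N2)⁻¹ j j) * (((1 - δ • N1)⁻¹ *ᵥ fun _ => (1 : ℝ)) i) ^ 2
            + δ * ((1 - δ • N1)⁻¹ i i) * (((1 - δ • N2)⁻¹ *ᵥ fun _ => (1 : ℝ)) j) ^ 2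
            + 2 * (((1 - δ • N1)⁻¹ *ᵥ fun _ => (1 : ℝ)) i)
                * (((1 - δ • N2)⁻¹ *ᵥ fun _ => (1 : ℝ)) j))
          / (1 - δ ^ 2 * ((1 - δ • N1)⁻¹ i i) * ((1 - δ • N2)⁻¹ j j)) := by
  classical
  set G : Matrix (Fin n₁ ⊕ Fin n₂) (Fin n₁ ⊕ Fin n₂) ℝ := Matrix.fromBlocks N1 0 0 N2 with hGdef
  set E : Matrix (Fin n₁ ⊕ Fin n₂) (Fin n₁ ⊕ Fin n₂) ℝ :=
    Matrix.single (Sum.inl i) (Sum.inr j) (1 : ℝ) +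
      Matrix.single (Sum.inr j) (Sum.inl i) (1 : ℝ) with hEdef
  set A : Matrix (Fin n₁ ⊕ Fin n₂) (Fin n₁ ⊕ Fin n₂) ℝ := 1 - δ • G with hAdef
  set B : Matrix (Fin n₁ ⊕ Fin n₂) (Fin n₁ ⊕ Fin n₂) ℝ := 1 - δ • (G + E) with hBdef
  set M1 : Matrix (Fin n₁) (Fin n₁) ℝ := (1 - δ • N1)⁻¹ with hM1def
  set M2 : Matrix (Fin n₂) (Fin n₂) ℝ := (1 - δ • N2)⁻¹ with hM2def
  set u : (Fin n₁ ⊕ Fin n₂) → ℝ := Pi.single (Sum.inl i) 1 with hudef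
  set v : (Fin n₁ ⊕ Fin n₂) → ℝ := Pi.single (Sum.inr j) 1 with hvdef
  set p : (Fin n₁ ⊕ Fin n₂) → ℝ := A⁻¹ *ᵥ u with hpdef
  set q : (Fin n₁ ⊕ Fin n₂) → ℝ := A⁻¹ *ᵥ v with hqdef
  set mi : ℝ := M1 i i with hmidef
  set mj : ℝ := M2 j j with hmjdef
  set d : ℝ := 1 - δ ^ 2 * mi * mj with hddef
  set bi : ℝ := (M1 *ᵥ fun _ => (1 : ℝ)) i with hbidef
  set bj : ℝ := (M2 *ᵥ fun _ => (1 : ℝ)) j with hbjdef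
  have hd : d ≠ 0 := hden
  -- A as blocks
  have hAblocks : A = Matrix.fromBlocks (1 - δ • N1) 0 0 (1 - δ • N2) := by
    rw [hAdef, hGdef]
    ext (a | a) (b | b) <;>
      simp [Matrix.sub_apply, Matrix.one_apply, Matrix.fromBlocks]
  have hAunit : IsUnit A.det := (Matrix.isUnit_iff_isUnit_det _).1 hG
  have hAinv : A⁻¹ = Matrix.fromBlocks M1 0 0 M2 := by
    apply Matrix.inv_eq_right_inv
    rw [hAblocks, Matrix.fromBlocks_multiply]
    simp only [Matrix.mul_zero, Matrix.zero_mul, add_zero, zero_add, hM1def, hM2def,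
      Matrix.mul_nonsing_inv _ ((Matrix.isUnit_iff_isUnit_det _).1 h1),
      Matrix.mul_nonsing_inv _ ((Matrix.isUnit_iff_isUnit_det _).1 h2)]
    exact Matrix.fromBlocks_one
  have hAA : A * A⁻¹ = 1 := Matrix.mul_nonsing_inv _ hAunit
  -- symmetry
  have hAsymm : A⁻¹ᵀ = A⁻¹ := by
    rw [Matrix.transpose_nonsing_inv]
    congr 1
    rw [hAblocks, Matrix.fromBlocks_transpose]
    simp [Matrix.transpose_sub, Matrix.transpose_smul, hs1.eq, hs2.eq]
  -- entries of p, q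
  have hp : ∀ a, p a = A⁻¹ a (Sum.inl i) := by
    intro a; rw [hpdef, hudef]; simp [Matrix.mulVec_single]
  have hq : ∀ a, q a = A⁻¹ a (Sum.inr j) := by
    intro a; rw [hqdef, hvdef]; simp [Matrix.mulVec_single]
  have hup : u ⬝ᵥ p = mi := by
    rw [hudef, single_dotProduct, one_mul, hp, hAinv, hmidef]
    simp [Matrix.fromBlocks]
  have hvq : v ⬝ᵥ q = mj := by
    rw [hvdef, single_dotProduct, one_mul, hq, hAinv, hmjdef]
    simp [Matrix.fromBlocks]
  have hvp : v ⬝ᵥ p = 0 := by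
    rw [hvdef, single_dotProduct, one_mul, hp, hAinv]
    simp [Matrix.fromBlocks]
  have huq : u ⬝ᵥ q = 0 := by
    rw [hudef, single_dotProduct, one_mul, hq, hAinv]
    simp [Matrix.fromBlocks]
  -- E as rank-2
  have hE : E = vecMulVec u v + vecMulVec v u := by
    rw [hEdef, hudef, hvdef, Matrix.single_eq_single_vecMulVec_single,
      Matrix.single_eq_single_vecMulVec_single]
  have hBAE : B = A - δ • E := by
    rw [hBdef, hAdef, smul_add, sub_add_eq_sub_sub]
  -- the correction matrix
  set S : Matrix (Fin n₁ ⊕ Fin n₂) (Fin n₁ ⊕ Fin n₂) ℝ :=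
    vecMulVec p q + vecMulVec q p + (δ * mj) • vecMulVec p p + (δ * mi) • vecMulVec q q
    with hSdef
  set C : Matrix (Fin n₁ ⊕ Fin n₂) (Fin n₁ ⊕ Fin n₂) ℝ := A⁻¹ + (δ / d) • S with hCdef
  have hAp : A *ᵥ p = u := by
    rw [hpdef, Matrix.mulVec_mulVec, hAA, Matrix.one_mulVec]
  have hAq : A *ᵥ q = v := by
    rw [hqdef, Matrix.mulVec_mulVec, hAA, Matrix.one_mulVec]
  have hvA : A⁻¹ᵀ *ᵥ v = q := by rw [hAsymm, ← hqdef]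
  have huA : A⁻¹ᵀ *ᵥ u = p := by rw [hAsymm, ← hpdef]
  have hC' : B * (d • A⁻¹ + δ • S) = d • 1 := by
    rw [hBAE, hSdef, hE, hddef]
    simp only [Matrix.mul_add, Matrix.add_mul, Matrix.sub_mul, Matrix.mul_sub,
      Matrix.mul_smul, Matrix.smul_mul, hAA, bf_mul_vecMulVec, bf_vecMulVec_mul,
      bf_vecMulVec_mul_vecMulVec, hAp, hAq, hvA, huA, hup, hvq, hvp, huq,
      bf_vecMulVec_mulVec, bf_vecMulVec_smul_left, bf_vecMulVec_zero_left,
      zero_smul, smul_zero, smul_smul, smul_add, add_zero, zero_add]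
    module
  have hdC : d • C = d • A⁻¹ + δ • S := by
    rw [hCdef, smul_add, smul_smul, mul_div_cancel₀ δ hd]
  have hBC : B * C = 1 := by
    have h0 : d • (B * C) = d • (1 : Matrix (Fin n₁ ⊕ Fin n₂) (Fin n₁ ⊕ Fin n₂) ℝ) := by
      rw [← Matrix.mul_smul, hdC, hC']
    exact smul_right_injective _ hd h0
  have hBinv : B⁻¹ = C := Matrix.inv_eq_right_inv hBC
  -- sums
  have hsump : ∑ a, p a = bi := by
    have h1' : ∀ a, p a = A⁻¹ (Sum.inl i) a := by
      intro a; rw [hp a, ← Matrix.transpose_apply A⁻¹, hAsymm]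
    simp only [h1', hAinv, hbidef]
    rw [Fintype.sum_sum_type]
    simp [Matrix.fromBlocks, Matrix.mulVec, dotProduct]
  have hsumq : ∑ a, q a = bj := by
    have h1' : ∀ a, q a = A⁻¹ (Sum.inr j) a := by
      intro a; rw [hq a, ← Matrix.transpose_apply A⁻¹, hAsymm]
    simp only [h1', hAinv, hbjdef]
    rw [Fintype.sum_sum_type]
    simp [Matrix.fromBlocks, Matrix.mulVec, dotProduct]
  have hpd : p ⬝ᵥ (fun _ => (1:ℝ)) = bi := by
    rw [← hsump]; simp [dotProduct]
  have hqd : q ⬝ᵥ (fun _ => (1:ℝ)) = bj := by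
    rw [← hsumq]; simp [dotProduct]
  rw [hBinv, hCdef, hSdef]
  simp only [Matrix.add_mulVec, Matrix.smul_mulVec, bf_vecMulVec_mulVec,
    hpd, hqd, Pi.add_apply, Pi.smul_apply, smul_eq_mul, Finset.sum_add_distrib]
  rw [add_sub_cancel_left]
  simp only [Finset.sum_add_distrib, ← Finset.mul_sum, hsump, hsumq]
  field_simp
  ring
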